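/- arXiv:1207.2966 — 4 statements merged into one kernel-verified Lean document; each statement's English description precedes it below -/
import Mathlib

section
/- Let q be an odd prime power and let g, h be elements of PGL(2,q) with θ(g) = θ(h) and θ(g) ∉ {0, 4}. Then g and h are conjugate in PGL(2,q). -/
open Matrix

/-- `θ(M) = (tr M)² / det M` for an invertible 2×2 matrix `M`. -/
noncomputable def theta {F : Type*} [Field F] (M : GL (Fin 2) F) : F :=
  (Matrix.trace (M : Matrix (Fin 2) (Fin 2) F)) ^ 2 / (M : Matrix (Fin 2) (Fin 2) F).det

/-- `PGL(2, F)`, the quotient of `GL(2, F)` by its centre (the nonzero scalar matrices). -/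
abbrev PGL2 (F : Type*) [Field F] := GL (Fin 2) F ⧸ Subgroup.center (GL (Fin 2) F)

/-- The conjugacy invariant `θ` on `PGL(2, F)` induced by `M ↦ (tr M)²/det M`
(well defined since `θ` is invariant under scalar multiplication). -/
noncomputable def thetaPGL {F : Type*} [Field F] (g : PGL2 F) : F :=
  theta (Quotient.out g)

/-- `PSL(2, F)` viewed as a subgroup of `PGL(2, F)`: the image of `SL(2, F)`. -/
def PSLsub (F : Type*) [Field F] : Subgroup (PGL2 F) :=
  ((QuotientGroup.mk' (Subgroup.center (GL (Fin 2) F))).comp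
    Matrix.SpecialLinearGroup.toGL).range



lemma exists_conj_companion {F : Type*} [Field F] (A : Matrix (Fin 2) (Fin 2) F)
    (hns : ¬ (A 0 1 = 0 ∧ A 1 0 = 0 ∧ A 0 0 = A 1 1)) :
    ∃ P : Matrix (Fin 2) (Fin 2) F, IsUnit P.det ∧
      A * P = P * !![0, -A.det; 1, A.trace] := by
  by_cases hc : A 1 0 ≠ 0
  · refine ⟨!![1, A 0 0; 0, A 1 0], by simp [Matrix.det_fin_two, hc], ?_⟩
    ext i j
    fin_cases i <;> fin_cases j <;>
      simp [Matrix.mul_apply, Fin.sum_univ_two, Matrix.det_fin_two, Matrix.trace_fin_two] <;> ring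
  · push_neg at hc
    by_cases hb : A 0 1 ≠ 0
    · refine ⟨!![0, A 0 1; 1, A 1 1], by simp [Matrix.det_fin_two, hb], ?_⟩
      ext i j
      fin_cases i <;> fin_cases j <;>
        simp [Matrix.mul_apply, Fin.sum_univ_two, Matrix.det_fin_two, Matrix.trace_fin_two] <;> ring
    · push_neg at hb
      have had : A 0 0 ≠ A 1 1 := fun had => hns ⟨hb, hc, had⟩
      refine ⟨!![1, A 0 0; 1, A 1 1], ?_, ?_⟩
      · have : (!![1, A 0 0; 1, A 1 1] : Matrix (Fin 2) (Fin 2) F).det = A 1 1 - A 0 0 := by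
          simp [Matrix.det_fin_two]
        rw [this]
        exact (sub_ne_zero_of_ne had.symm).isUnit
      · ext i j
        fin_cases i <;> fin_cases j <;>
          simp [Matrix.mul_apply, Fin.sum_univ_two, Matrix.det_fin_two, Matrix.trace_fin_two,
            hb, hc] <;> ring

lemma nonscalar_of_sq_trace_ne {F : Type*} [Field F] (A : Matrix (Fin 2) (Fin 2) F)
    (h4 : A.trace ^ 2 ≠ 4 * A.det) :
    ¬ (A 0 1 = 0 ∧ A 1 0 = 0 ∧ A 0 0 = A 1 1) := by
  rintro ⟨hb, hc, had⟩
  apply h4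
  rw [Matrix.det_fin_two, Matrix.trace_fin_two, hb, hc, ← had]
  ring

theorem conj_of_theta_eq (F : Type*) [Field F] [Fintype F]
    (hodd : Odd (Fintype.card F)) (hq : 3 < Fintype.card F)
    (g h : PGL2 F) (hθ : thetaPGL g = thetaPGL h)
    (h0 : thetaPGL g ≠ 0) (h4 : thetaPGL g ≠ 4) :
    IsConj g h := by
  set M : GL (Fin 2) F := Quotient.out g with hM
  set N : GL (Fin 2) F := Quotient.out h with hN
  set A : Matrix (Fin 2) (Fin 2) F := (M : Matrix (Fin 2) (Fin 2) F) with hA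
  set B : Matrix (Fin 2) (Fin 2) F := (N : Matrix (Fin 2) (Fin 2) F) with hB
  have hθg : thetaPGL g = A.trace ^ 2 / A.det := rfl
  have hθh : thetaPGL h = B.trace ^ 2 / B.det := rfl
  have hdetA : A.det ≠ 0 := ((Matrix.isUnit_iff_isUnit_det A).mp M.isUnit).ne_zero
  have hdetB : B.det ≠ 0 := ((Matrix.isUnit_iff_isUnit_det B).mp N.isUnit).ne_zero
  have htrA : A.trace ≠ 0 := by
    intro htr
    apply h0
    rw [hθg, htr]
    simp
  have htrB : B.trace ≠ 0 := by
    intro htr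
    apply h0
    rw [hθ, hθh, htr]
    simp
  set c : F := A.trace / B.trace with hcdef
  have hc : c ≠ 0 := div_ne_zero htrA htrB
  -- the rescaled matrix
  set B' : Matrix (Fin 2) (Fin 2) F := c • B with hB'
  have htrB' : B'.trace = A.trace := by
    rw [hB', Matrix.trace_smul, smul_eq_mul, hcdef, div_mul_cancel₀ _ htrB]
  have hcross : A.trace ^ 2 * B.det = B.trace ^ 2 * A.det := by
    have hθ' := hθ
    rw [hθg, hθh] at hθ'
    exact (div_eq_div_iff hdetA hdetB).mp hθ'
  have hdetB' : B'.det = A.det := by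
    rw [hB', Matrix.det_smul, Fintype.card_fin, hcdef, div_pow, div_mul_eq_mul_div, hcross,
      mul_div_assoc]
    field_simp
  have h4A : A.trace ^ 2 ≠ 4 * A.det := by
    intro hcontra
    apply h4
    rw [hθg, hcontra, mul_div_assoc, div_self hdetA, mul_one]
  have h4B' : B'.trace ^ 2 ≠ 4 * B'.det := by rw [htrB', hdetB']; exact h4A
  obtain ⟨P, hPdet, hPA⟩ := exists_conj_companion A (nonscalar_of_sq_trace_ne A h4A)
  obtain ⟨Q, hQdet, hQB⟩ := exists_conj_companion B' (nonscalar_of_sq_trace_ne B' h4B')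
  rw [htrB', hdetB'] at hQB
  -- units
  set Pu : GL (Fin 2) F := ((Matrix.isUnit_iff_isUnit_det P).mpr hPdet).unit with hPu
  set Qu : GL (Fin 2) F := ((Matrix.isUnit_iff_isUnit_det Q).mpr hQdet).unit with hQu
  have hPuv : (Pu : Matrix (Fin 2) (Fin 2) F) = P := IsUnit.unit_spec _
  have hQuv : (Qu : Matrix (Fin 2) (Fin 2) F) = Q := IsUnit.unit_spec _
  have hCdet : IsUnit (!![0, -A.det; 1, A.trace] : Matrix (Fin 2) (Fin 2) F).det := by
    have : (!![0, -A.det; 1, A.trace] : Matrix (Fin 2) (Fin 2) F).det = A.det := by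
      rw [Matrix.det_fin_two_of]; ring
    rw [this]; exact hdetA.isUnit
  set Cu : GL (Fin 2) F := ((Matrix.isUnit_iff_isUnit_det _).mpr hCdet).unit with hCu
  have hCuv : (Cu : Matrix (Fin 2) (Fin 2) F) = !![0, -A.det; 1, A.trace] := IsUnit.unit_spec _
  -- the central scalar unit
  set z : GL (Fin 2) F :=
    ⟨c • 1, c⁻¹ • 1, by rw [smul_mul_smul_comm, mul_inv_cancel₀ hc, one_mul, one_smul],
      by rw [smul_mul_smul_comm, inv_mul_cancel₀ hc, one_mul, one_smul]⟩ with hz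
  have hzv : (z : Matrix (Fin 2) (Fin 2) F) = c • 1 := rfl
  have hzcen : z ∈ Subgroup.center (GL (Fin 2) F) := by
    rw [Subgroup.mem_center_iff]
    intro w
    apply Units.ext
    show (w : Matrix (Fin 2) (Fin 2) F) * (c • 1) = (c • 1) * w
    rw [mul_smul_comm, smul_mul_assoc, mul_one, one_mul]
  -- unit-level conjugation equations
  have e1 : M * Pu = Pu * Cu := by
    apply Units.ext
    show (M : Matrix (Fin 2) (Fin 2) F) * Pu = (Pu : Matrix (Fin 2) (Fin 2) F) * Cu
    rw [hPuv, hCuv]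
    exact hPA
  have e2 : (z * N) * Qu = Qu * Cu := by
    apply Units.ext
    show ((z : Matrix (Fin 2) (Fin 2) F) * N) * Qu = (Qu : Matrix (Fin 2) (Fin 2) F) * Cu
    rw [hzv, hQuv, hCuv, smul_mul_assoc, one_mul]
    exact hQB
  have e1' : (M : GL (Fin 2) F) = Pu * Cu * Pu⁻¹ := by
    rw [← e1]
    group
  have key : SemiconjBy (Qu * Pu⁻¹) M (z * N) := by
    show Qu * Pu⁻¹ * M = z * N * (Qu * Pu⁻¹)
    rw [e1', show Qu * Pu⁻¹ * (Pu * Cu * Pu⁻¹) = Qu * Cu * Pu⁻¹ by group, ← e2]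
    group
  have key2 : (Qu * Pu⁻¹) * M * (Qu * Pu⁻¹)⁻¹ = z * N := by
    rw [mul_inv_eq_iff_eq_mul]; exact key
  set f := QuotientGroup.mk' (Subgroup.center (GL (Fin 2) F)) with hf
  have hz1 : f z = 1 := (QuotientGroup.eq_one_iff z).mpr hzcen
  have hgM : f M = g := Quotient.out_eq g
  have hhN : f N = h := Quotient.out_eq h
  refine isConj_iff.mpr ⟨f (Qu * Pu⁻¹), ?_⟩
  rw [← hgM, ← map_inv, ← _root_.map_mul f, ← _root_.map_mul f, key2, _root_.map_mul f, hz1, one_mul, hhN]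
end

section
/- Let q be an odd prime power and g an element of PGL(2,q). If g has order 2 then θ(g) = 0; if g has order 3 then θ(g) = 1; if g has order 4 then θ(g) = 2; if g has order 6 then θ(g) = 3. -/
open Matrix

section helpers
variable {F : Type*} [Field F]

lemma ch2 (A : Matrix (Fin 2) (Fin 2) F) : A * A = A.trace • A - A.det • 1 := by
  ext i j
  fin_cases i <;> fin_cases j <;>
    simp [Matrix.mul_apply, Matrix.trace, Matrix.det_fin_two, Fin.sum_univ_two,
      Matrix.one_apply] <;> ring

def Umat : GL (Fin 2) F :=
  ⟨!![1,1;0,1], !![1,-1;0,1],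
    by ext i j; fin_cases i <;> fin_cases j <;> simp [Matrix.mul_apply, Fin.sum_univ_two, Matrix.one_apply],
    by ext i j; fin_cases i <;> fin_cases j <;> simp [Matrix.mul_apply, Fin.sum_univ_two, Matrix.one_apply]⟩

def Vmat : GL (Fin 2) F :=
  ⟨!![1,0;1,1], !![1,0;-1,1],
    by ext i j; fin_cases i <;> fin_cases j <;> simp [Matrix.mul_apply, Fin.sum_univ_two, Matrix.one_apply],
    by ext i j; fin_cases i <;> fin_cases j <;> simp [Matrix.mul_apply, Fin.sum_univ_two, Matrix.one_apply]⟩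

lemma gl_mem_center_iff (M : GL (Fin 2) F) :
    M ∈ Subgroup.center (GL (Fin 2) F) ↔
      ∃ c : F, (M : Matrix (Fin 2) (Fin 2) F) = c • 1 := by
  constructor
  · intro hM
    have h := Subgroup.mem_center_iff.mp hM
    have hU := congrArg (fun x : GL (Fin 2) F => (x : Matrix (Fin 2) (Fin 2) F)) (h Umat)
    have hV := congrArg (fun x : GL (Fin 2) F => (x : Matrix (Fin 2) (Fin 2) F)) (h Vmat)
    simp only [Units.val_mul] at hU hV
    set A : Matrix (Fin 2) (Fin 2) F := (M : Matrix (Fin 2) (Fin 2) F) with hA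
    have e1 := congrFun (congrFun hU 0) 0
    have e2 := congrFun (congrFun hU 0) 1
    have e3 := congrFun (congrFun hV 1) 1
    simp [Umat, Vmat, Matrix.mul_apply, Fin.sum_univ_two] at e1 e2 e3
    refine ⟨A 0 0, ?_⟩
    ext i j
    fin_cases i <;> fin_cases j <;> simp [Matrix.one_apply] <;>
      first | exact e1 | exact e3 | linear_combination e2
  · rintro ⟨c, hc⟩
    refine Subgroup.mem_center_iff.mpr fun g => Units.ext ?_
    simp only [Units.val_mul, hc, Matrix.smul_mul, Matrix.mul_smul, Matrix.one_mul,
      Matrix.mul_one]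

lemma trace_eq_zero_of_sq_scalar {A : Matrix (Fin 2) (Fin 2) F}
    (h1 : ∀ c : F, A ≠ c • 1) {c : F} (h2 : A * A = c • 1) : A.trace = 0 := by
  by_contra ht
  have h3 : A.trace • A = (c + A.det) • 1 := by
    have := ch2 A
    rw [h2] at this
    rw [add_smul]
    linear_combination (norm := module) -this
  exact h1 (A.trace⁻¹ * (c + A.det)) (by
    rw [mul_smul, ← h3, smul_smul, inv_mul_cancel₀ ht, one_smul])

lemma cube_eq (A : Matrix (Fin 2) (Fin 2) F) :
    A ^ 3 = (A.trace ^ 2 - A.det) • A - (A.trace * A.det) • 1 := by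
  have h := ch2 A
  calc A ^ 3 = (A * A) * A := by rw [pow_succ, pow_two]
    _ = A.trace • (A * A) - A.det • A := by
        rw [h]; simp [Matrix.sub_mul, Matrix.smul_mul, Matrix.one_mul, h]
    _ = (A.trace ^ 2 - A.det) • A - (A.trace * A.det) • 1 := by
        rw [h]; module

lemma sq_trace_eq_det_of_cube_scalar {A : Matrix (Fin 2) (Fin 2) F}
    (h1 : ∀ c : F, A ≠ c • 1) {c : F} (h2 : A ^ 3 = c • 1) :
    A.trace ^ 2 = A.det := by
  by_contra ht
  have h3 : (A.trace ^ 2 - A.det) • A = (c + A.trace * A.det) • 1 := by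
    have := cube_eq A
    rw [h2] at this
    rw [add_smul]
    linear_combination (norm := module) -this
  have hne : A.trace ^ 2 - A.det ≠ 0 := sub_ne_zero.mpr ht
  exact h1 ((A.trace ^ 2 - A.det)⁻¹ * (c + A.trace * A.det)) (by
    rw [mul_smul, ← h3, smul_smul, inv_mul_cancel₀ hne, one_smul])

end helpers

theorem theta_of_small_order (F : Type*) [Field F] [Fintype F]
    (hodd : Odd (Fintype.card F)) (hq : 3 < Fintype.card F) (g : PGL2 F) :
    (orderOf g = 2 → thetaPGL g = 0) ∧
    (orderOf g = 3 → thetaPGL g = 1) ∧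
    (orderOf g = 4 → thetaPGL g = 2) ∧
    (orderOf g = 6 → thetaPGL g = 3) := by
  set M : GL (Fin 2) F := Quotient.out g with hM
  set A : Matrix (Fin 2) (Fin 2) F := (M : Matrix (Fin 2) (Fin 2) F) with hA
  have hg : (QuotientGroup.mk M : PGL2 F) = g := Quotient.out_eq g
  have key : ∀ n : ℕ, g ^ n = 1 ↔ ∃ c : F, A ^ n = c • 1 := by
    intro n
    rw [← hg, ← QuotientGroup.mk_pow, QuotientGroup.eq_one_iff, gl_mem_center_iff]
    simp [hA, Units.val_pow_eq_pow_val]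
  have hdet : A.det ≠ 0 := by
    have hu : IsUnit A := ⟨M, rfl⟩
    exact ((Matrix.isUnit_iff_isUnit_det A).mp hu).ne_zero
  have hns : ∀ {k : ℕ}, ¬ (orderOf g ∣ k) → ∀ c : F, A ^ k ≠ c • 1 := by
    intro k hk c hc
    exact hk (orderOf_dvd_of_pow_eq_one ((key k).mpr ⟨c, hc⟩))
  have hth : thetaPGL g = A.trace ^ 2 / A.det := rfl
  have htr2 : (A ^ 2).trace = A.trace ^ 2 - 2 * A.det := by
    rw [pow_two, ch2]
    simp [Matrix.trace_sub, Matrix.trace_smul, Matrix.trace_one]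
    ring
  refine ⟨?_, ?_, ?_, ?_⟩
  · intro h
    obtain ⟨c, hc⟩ := (key 2).mp (by have hp := pow_orderOf_eq_one g; rwa [h] at hp)
    rw [pow_two] at hc
    have h1 : ∀ c : F, A ≠ c • 1 := fun c hcc =>
      hns (k := 1) (by rw [h]; decide) c (by simpa using hcc)
    rw [hth, trace_eq_zero_of_sq_scalar h1 hc]
    simp
  · intro h
    obtain ⟨c, hc⟩ := (key 3).mp (by have hp := pow_orderOf_eq_one g; rwa [h] at hp)
    have h1 : ∀ c : F, A ≠ c • 1 := fun c hcc =>
      hns (k := 1) (by rw [h]; decide) c (by simpa using hcc)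
    rw [hth, sq_trace_eq_det_of_cube_scalar h1 hc]
    exact div_self hdet
  · intro h
    obtain ⟨c, hc⟩ := (key 4).mp (by have hp := pow_orderOf_eq_one g; rwa [h] at hp)
    have h1 : ∀ c : F, A ^ 2 ≠ c • 1 := hns (by rw [h]; decide)
    have hsq : A ^ 2 * A ^ 2 = c • 1 := by rw [← pow_add]; exact hc
    have ht := trace_eq_zero_of_sq_scalar h1 hsq
    rw [htr2, sub_eq_zero] at ht
    rw [hth, ht, mul_div_assoc, div_self hdet, mul_one]
  · intro h
    obtain ⟨c, hc⟩ := (key 6).mp (by have hp := pow_orderOf_eq_one g; rwa [h] at hp)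
    have h1 : ∀ c : F, A ^ 2 ≠ c • 1 := hns (by rw [h]; decide)
    have hcube : (A ^ 2) ^ 3 = c • 1 := by rw [← pow_mul]; exact hc
    have ht := sq_trace_eq_det_of_cube_scalar h1 hcube
    rw [htr2, Matrix.det_pow] at ht
    have hsplit : A.trace ^ 2 = 3 * A.det ∨ A.trace ^ 2 = A.det := by
      have hf : (A.trace ^ 2 - 3 * A.det) * (A.trace ^ 2 - A.det) = 0 := by
        linear_combination ht
      rcases mul_eq_zero.mp hf with h' | h'
      · exact Or.inl (by linear_combination h')
      · exact Or.inr (by linear_combination h')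
    rcases hsplit with h' | h'
    · rw [hth, h', mul_div_assoc, div_self hdet, mul_one]
    · exfalso
      have h3 : A ^ 3 = (-(A.trace * A.det)) • 1 := by
        rw [cube_eq, show A.trace ^ 2 - A.det = 0 by rw [h']; ring]
        simp
      have := orderOf_dvd_of_pow_eq_one ((key 3).mpr ⟨-(A.trace * A.det), h3⟩)
      rw [h] at this
      exact absurd this (by decide)
end

section
/- Let q be an odd prime power and let g be an element of order (q+1)/2 in PSL(2,q) ⊆ PGL(2,q). Then θ(g) is a square in F_q, and θ(g) − 4 is not a square in F_q. -/
open Matrix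

section Aux

variable {F : Type*} [Field F]

/-- Cayley–Hamilton for 2×2 matrices, by direct computation. -/
lemma cayley2 (A : Matrix (Fin 2) (Fin 2) F) :
    A * A = (Matrix.trace A) • A - (A.det) • (1 : Matrix (Fin 2) (Fin 2) F) := by
  ext i j
  fin_cases i <;> fin_cases j <;>
    simp [Matrix.mul_apply, Fin.sum_univ_two, Matrix.trace_fin_two, Matrix.det_fin_two,
      Matrix.one_apply] <;> ring

/-- A scalar element of `GL(2,F)` is central. -/
lemma scalar_mem_center (a : F) (u : GL (Fin 2) F)
    (h : (u : Matrix (Fin 2) (Fin 2) F) = a • 1) :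
    u ∈ Subgroup.center (GL (Fin 2) F) := by
  rw [Subgroup.mem_center_iff]
  intro v
  apply Units.ext
  show (v : Matrix (Fin 2) (Fin 2) F) * u = (u : Matrix (Fin 2) (Fin 2) F) * v
  rw [h, mul_smul_comm, smul_mul_assoc, mul_one, one_mul]

/-- A central element of `GL(2,F)` is scalar. -/
lemma center_scalar (z : GL (Fin 2) F) (hz : z ∈ Subgroup.center (GL (Fin 2) F)) :
    ∃ a : F, a ≠ 0 ∧ (z : Matrix (Fin 2) (Fin 2) F) = a • 1 := by
  rw [Subgroup.mem_center_iff] at hz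
  set zm : Matrix (Fin 2) (Fin 2) F := (z : Matrix (Fin 2) (Fin 2) F) with hzm
  have hu1 : (!![(1:F),1;0,1] : Matrix (Fin 2) (Fin 2) F) * !![1,-1;0,1] = 1 := by
    ext i j; fin_cases i <;> fin_cases j <;>
      simp [Matrix.mul_apply, Fin.sum_univ_two, Matrix.one_apply]
  have hu1' : (!![(1:F),-1;0,1] : Matrix (Fin 2) (Fin 2) F) * !![1,1;0,1] = 1 := by
    ext i j; fin_cases i <;> fin_cases j <;>
      simp [Matrix.mul_apply, Fin.sum_univ_two, Matrix.one_apply]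
  have hu2 : (!![(1:F),0;1,1] : Matrix (Fin 2) (Fin 2) F) * !![1,0;-1,1] = 1 := by
    ext i j; fin_cases i <;> fin_cases j <;>
      simp [Matrix.mul_apply, Fin.sum_univ_two, Matrix.one_apply]
  have hu2' : (!![(1:F),0;-1,1] : Matrix (Fin 2) (Fin 2) F) * !![1,0;1,1] = 1 := by
    ext i j; fin_cases i <;> fin_cases j <;>
      simp [Matrix.mul_apply, Fin.sum_univ_two, Matrix.one_apply]
  set U1 : GL (Fin 2) F := ⟨!![1,1;0,1], !![1,-1;0,1], hu1, hu1'⟩ with hU1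
  set U2 : GL (Fin 2) F := ⟨!![1,0;1,1], !![1,0;-1,1], hu2, hu2'⟩ with hU2
  have e1 : (!![(1:F),1;0,1] : Matrix (Fin 2) (Fin 2) F) * zm = zm * !![1,1;0,1] :=
    congr_arg Units.val (hz U1)
  have e2 : (!![(1:F),0;1,1] : Matrix (Fin 2) (Fin 2) F) * zm = zm * !![1,0;1,1] :=
    congr_arg Units.val (hz U2)
  have c0 : zm 1 0 = 0 := by
    have := congr_fun (congr_fun e1 0) 0
    simp [Matrix.mul_apply, Fin.sum_univ_two] at this
    exact this
  have da : zm 1 1 = zm 0 0 := by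
    have := congr_fun (congr_fun e1 0) 1
    simp [Matrix.mul_apply, Fin.sum_univ_two] at this
    linear_combination this
  have b0 : zm 0 1 = 0 := by
    have := congr_fun (congr_fun e2 0) 0
    simp [Matrix.mul_apply, Fin.sum_univ_two] at this
    exact this
  refine ⟨zm 0 0, ?_, ?_⟩
  · intro h0
    have hdet : zm.det = 0 := by
      rw [Matrix.det_fin_two, c0, b0, h0]; ring
    have h1 : zm * (↑z⁻¹ : Matrix (Fin 2) (Fin 2) F) = 1 := by
      have := congr_arg Units.val (mul_inv_cancel z)
      rwa [Units.val_mul, Units.val_one] at this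
    have := congr_arg Matrix.det h1
    rw [Matrix.det_mul, hdet, Matrix.det_one, zero_mul] at this
    exact zero_ne_one this
  · ext i j; fin_cases i <;> fin_cases j <;>
      simp [c0, b0, da, Matrix.one_apply]

/-- `thetaPGL` of the class of an `SL₂` element is the square of its trace. -/
lemma thetaPGL_eq_sq_trace (g : PGL2 F) (S : Matrix.SpecialLinearGroup (Fin 2) F)
    (hS : QuotientGroup.mk' (Subgroup.center (GL (Fin 2) F))
      (Matrix.SpecialLinearGroup.toGL S) = g) :
    thetaPGL g = (Matrix.trace (S : Matrix (Fin 2) (Fin 2) F))^2 := by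
  have hmem : (Matrix.SpecialLinearGroup.toGL S)⁻¹ * (Quotient.out g : GL (Fin 2) F)
      ∈ Subgroup.center (GL (Fin 2) F) := by
    apply QuotientGroup.eq.mp
    rw [QuotientGroup.out_eq' g, ← hS, QuotientGroup.mk'_apply]
  obtain ⟨a, ha, hz⟩ := center_scalar _ hmem
  have hfact : (((Quotient.out g : GL (Fin 2) F)) : Matrix (Fin 2) (Fin 2) F)
      = a • (S : Matrix (Fin 2) (Fin 2) F) := by
    have : (Quotient.out g : GL (Fin 2) F) = Matrix.SpecialLinearGroup.toGL S *
        ((Matrix.SpecialLinearGroup.toGL S)⁻¹ * (Quotient.out g : GL (Fin 2) F)) := by group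
    rw [this, Units.val_mul, hz, mul_smul_comm, mul_one]
    rfl
  have hdet : (S : Matrix (Fin 2) (Fin 2) F).det = 1 := S.prop
  rw [thetaPGL, theta, hfact, Matrix.trace_smul, Matrix.det_smul, hdet, smul_eq_mul]
  rw [Fintype.card_fin]
  field_simp

end Aux

theorem theta_of_order_half_q_add_one (F : Type*) [Field F] [Fintype F]
    (hodd : Odd (Fintype.card F))
    (g : PGL2 F) (hmem : g ∈ PSLsub F)
    (hg : orderOf g = (Fintype.card F + 1) / 2) :
    IsSquare (thetaPGL g) ∧ ¬ IsSquare (thetaPGL g - 4) := by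
  obtain ⟨S, hS⟩ := hmem
  rw [MonoidHom.comp_apply] at hS
  set q := Fintype.card F with hq
  set A : Matrix (Fin 2) (Fin 2) F := (S : Matrix (Fin 2) (Fin 2) F) with hA
  set t : F := Matrix.trace A with htr
  have htheta : thetaPGL g = t^2 := thetaPGL_eq_sq_trace g S hS
  -- basic numerics
  have hq2 : 2 ≤ q := Fintype.one_lt_card
  obtain ⟨k, hk⟩ := hodd
  have hq3 : 3 ≤ q := by omega
  have h2n : 2 * orderOf g = q + 1 := by rw [hg]; omega
  have hn2 : 2 ≤ orderOf g := by omega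
  -- char of F is not 2
  have h2F : (2 : F) ≠ 0 := by
    intro h2
    have hchar : ringChar F ∣ 2 := (CharP.cast_eq_zero_iff F (ringChar F) 2).mp (by exact_mod_cast h2)
    have hp : (ringChar F).Prime := CharP.char_is_prime F (ringChar F)
    have h2' : ringChar F = 2 := (Nat.prime_dvd_prime_iff_eq hp Nat.prime_two).mp hchar
    obtain ⟨m, _, hcard⟩ := FiniteField.card F (ringChar F)
    rw [h2'] at hcard
    have : 2 ∣ q := by rw [hq, hcard]; exact dvd_pow_self 2 m.pos.ne'
    omega
  -- Cayley–Hamilton for A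
  have hAA : A * A = t • A - (1 : Matrix (Fin 2) (Fin 2) F) := by
    rw [cayley2 A, ← htr, show A.det = 1 from S.prop, one_smul]
  -- from matrix powers of S to powers of g
  have hgpow : ∀ m : ℕ, A ^ m = 1 → g ^ m = 1 := by
    intro m hm
    have hSm : S ^ m = 1 := Subtype.ext (by rw [Matrix.SpecialLinearGroup.coe_pow]; exact hm)
    rw [← hS, ← map_pow, ← map_pow, hSm, _root_.map_one, _root_.map_one]
  constructor
  · exact ⟨t, by rw [htheta]; ring⟩
  · rintro ⟨s, hs⟩
    rw [htheta] at hs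
    by_cases hs0 : s = 0
    · -- double eigenvalue case: g has order the characteristic
      rw [hs0, mul_zero] at hs
      have ht4 : (t - 2) * (t + 2) = 0 := by linear_combination hs
      obtain ⟨e, he, ht⟩ : ∃ e : F, e * e = 1 ∧ t = 2 * e := by
        rcases mul_eq_zero.mp ht4 with h | h
        · exact ⟨1, by ring, by linear_combination h⟩
        · exact ⟨-1, by ring, by linear_combination h⟩
      have key : ∀ m : ℕ, A ^ m
          = ((m : F) * e^(m+1)) • A + ((1 - (m : F)) * e^m) • (1 : Matrix (Fin 2) (Fin 2) F) := by
        intro m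
        induction m with
        | zero => simp
        | succ m ih =>
          rw [pow_succ, ih, add_mul, smul_mul_assoc, smul_mul_assoc, one_mul, hAA, ht]
          have hc : ((m+1 : ℕ) : F) * e^(m+1+1)
              = ((m : F) * e^(m+1)) * (2*e) + (1 - (m : F)) * e^m := by
            push_cast
            rw [pow_succ, pow_succ]
            linear_combination ((1 - (m:F)) * e^m) * he
          have hd : (1 - ((m+1 : ℕ) : F)) * e^(m+1) = -((m : F) * e^(m+1)) := by
            push_cast; ring
          rw [hc, hd]
          module
      set p := ringChar F with hpdef
      have hp : p.Prime := CharP.char_is_prime F p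
      have hpc : ((p : ℕ) : F) = 0 := CharP.cast_eq_zero F p
      have hAp : A ^ p = (e^p) • (1 : Matrix (Fin 2) (Fin 2) F) ^ 1 := by
        rw [key p, hpc]; simp
      have hgp : g ^ p = 1 := by
        rw [← hS, ← map_pow, ← map_pow]
        apply (QuotientGroup.eq_one_iff _).mpr
        apply scalar_mem_center (e^p)
        show ((S ^ p : Matrix.SpecialLinearGroup (Fin 2) F) : Matrix (Fin 2) (Fin 2) F) = _
        rw [Matrix.SpecialLinearGroup.coe_pow, ← hA, hAp, pow_one]
      have hnp : orderOf g ∣ p := orderOf_dvd_of_pow_eq_one hgp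
      have hop : orderOf g = p := by
        rcases (Nat.Prime.eq_one_or_self_of_dvd hp _ hnp) with h | h
        · omega
        · exact h
      obtain ⟨m, _, hcard⟩ := FiniteField.card F p
      have hpq : p ∣ q := by rw [hq, hcard]; exact dvd_pow_self p m.pos.ne'
      have hpq1 : p ∣ q + 1 := ⟨2, by omega⟩
      have h1 : p ∣ 1 := by
        have := Nat.dvd_sub hpq1 hpq
        simpa using this
      rw [Nat.dvd_one] at h1
      exact hp.one_lt.ne' (by omega)
    · -- distinct eigenvalues case: g ^ (q - 1) = 1
      have hl0' : s * s ≠ 0 := mul_ne_zero hs0 hs0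
      set l : F := (t + s) / 2 with hl
      set u : F := (t - s) / 2 with hu
      have hsum : l + u = t := by rw [hl, hu]; field_simp; ring
      have hdiff : l - u = s := by rw [hl, hu]; field_simp; ring
      have hlu : l * u = 1 := by
        rw [hl, hu]; field_simp; linear_combination hs
      have hl0 : l ≠ 0 := left_ne_zero_of_mul_eq_one hlu
      have hu0 : u ≠ 0 := right_ne_zero_of_mul_eq_one hlu
      have hlu0 : l - u ≠ 0 := by rw [hdiff]; exact hs0
      have hAA' : A * A = (l + u) • A - (1 : Matrix (Fin 2) (Fin 2) F) := by
        rw [hsum]; exact hAA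
      have key : ∀ m : ℕ, A ^ m
          = ((l^m - u^m)/(l-u)) • A + ((l*u^m - u*l^m)/(l-u)) • (1 : Matrix (Fin 2) (Fin 2) F) := by
        intro m
        induction m with
        | zero => simp [div_self hlu0]
        | succ m ih =>
          rw [pow_succ, ih, add_mul, smul_mul_assoc, smul_mul_assoc, one_mul, hAA']
          have hc : (l^(m+1) - u^(m+1))/(l-u)
              = ((l^m - u^m)/(l-u)) * (l + u) + (l*u^m - u*l^m)/(l-u) := by
            field_simp; ring
          have hd : (l*u^(m+1) - u*l^(m+1))/(l-u) = -((l^m - u^m)/(l-u)) := by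
            rw [← neg_div, div_eq_div_iff hlu0 hlu0]
            linear_combination (-(l - u)*(l^m - u^m)) * hlu
          rw [hc, hd]
          module
      have hl1 : l ^ (q - 1) = 1 := FiniteField.pow_card_sub_one_eq_one l hl0
      have hu1 : u ^ (q - 1) = 1 := FiniteField.pow_card_sub_one_eq_one u hu0
      have hA1 : A ^ (q - 1) = 1 := by
        rw [key (q-1), hl1, hu1, mul_one, mul_one, sub_self, zero_div, zero_smul, zero_add,
          div_self hlu0, one_smul]
      have hdvd1 : orderOf g ∣ q - 1 := orderOf_dvd_of_pow_eq_one (hgpow _ hA1)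
      have hdvd2 : orderOf g ∣ q + 1 := ⟨2, by omega⟩
      have hdvd : orderOf g ∣ 2 := by
        have := Nat.dvd_sub hdvd2 hdvd1
        have h2 : q + 1 - (q - 1) = 2 := by omega
        rwa [h2] at this
      have hq3' : q = 3 := by
        have := Nat.le_of_dvd (by norm_num) hdvd
        omega
      have h3 : (3 : F) = 0 := by
        have := FiniteField.cast_card_eq_zero F
        rw [← hq, hq3'] at this
        exact_mod_cast this
      have hs2 : s ^ 2 = 1 := by
        have := FiniteField.pow_card_sub_one_eq_one s hs0
        rwa [← hq, hq3'] at this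
      have hst : t^2 - 4 = 1 := by rw [hs]; linear_combination hs2
      by_cases ht0 : t = 0
      · rw [ht0] at hst
        exact h2F (by linear_combination -hst - h3)
      · have ht2 : t ^ 2 = 1 := by
          have := FiniteField.pow_card_sub_one_eq_one t ht0
          rwa [← hq, hq3'] at this
        exact one_ne_zero (by linear_combination -hst + ht2 - h3 : (1:F) = 0)
end

section
/- Let X = [[a,b],[c,−a]] and Y = [[−1,1],[−1,0]] be matrices over a field F with det X = 1 (i.e., −a² − bc = 1). Let T = [[−(b+c), 2a+b],[2a−c, b+c]]. Then tr T = 0, XT = TX⁻¹, YT = TY⁻¹, and det T = 3·det(XY) − (tr(XY))²; in particular T is invertible if and only if (tr(XY))²/det(XY) ≠ 3. -/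
open Matrix

theorem XYT_relations (F : Type*) [Field F] (hchar : (2 : F) ≠ 0)
    (a b c : F) (hdet : -a ^ 2 - b * c = 1) :
    Matrix.trace !![-(b + c), 2 * a + b; 2 * a - c, b + c] = 0 ∧
    !![a, b; c, -a] * !![-(b + c), 2 * a + b; 2 * a - c, b + c] =
      !![-(b + c), 2 * a + b; 2 * a - c, b + c] * (!![a, b; c, -a])⁻¹ ∧
    !![(-1 : F), 1; -1, 0] * !![-(b + c), 2 * a + b; 2 * a - c, b + c] =
      !![-(b + c), 2 * a + b; 2 * a - c, b + c] * (!![(-1 : F), 1; -1, 0])⁻¹ ∧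
    (!![-(b + c), 2 * a + b; 2 * a - c, b + c]).det =
      3 * (!![a, b; c, -a] * !![(-1 : F), 1; -1, 0]).det -
        (Matrix.trace (!![a, b; c, -a] * !![(-1 : F), 1; -1, 0])) ^ 2 ∧
    (IsUnit !![-(b + c), 2 * a + b; 2 * a - c, b + c] ↔
      (Matrix.trace (!![a, b; c, -a] * !![(-1 : F), 1; -1, 0])) ^ 2 /
          (!![a, b; c, -a] * !![(-1 : F), 1; -1, 0]).det ≠ 3) := by
  have hXinv : (!![a, b; c, -a])⁻¹ = !![-a, -b; -c, a] := by
    apply Matrix.inv_eq_right_inv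
    ext i j
    fin_cases i <;> fin_cases j <;>
      simp [Matrix.mul_apply, Fin.sum_univ_two] <;> first | linear_combination hdet | ring
  have hYinv : (!![(-1 : F), 1; -1, 0])⁻¹ = !![0, -1; 1, -1] := by
    apply Matrix.inv_eq_right_inv
    ext i j
    fin_cases i <;> fin_cases j <;> simp [Matrix.mul_apply, Fin.sum_univ_two]
  have hdetXY : (!![a, b; c, -a] * !![(-1 : F), 1; -1, 0]).det = 1 := by
    simp [Matrix.det_fin_two, Matrix.mul_apply, Fin.sum_univ_two]
    linear_combination hdet
  have htr : Matrix.trace (!![a, b; c, -a] * !![(-1 : F), 1; -1, 0]) = -a - b + c := by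
    simp [Matrix.trace_fin_two, Matrix.mul_apply, Fin.sum_univ_two]
    ring
  have hdetT : (!![-(b + c), 2 * a + b; 2 * a - c, b + c]).det = 3 - (-a - b + c) ^ 2 := by
    simp [Matrix.det_fin_two]
    linear_combination 3 * hdet
  refine ⟨by simp [Matrix.trace_fin_two], ?_, ?_, ?_, ?_⟩
  · rw [hXinv]
    ext i j
    fin_cases i <;> fin_cases j <;>
      simp [Matrix.mul_apply, Fin.sum_univ_two] <;> ring
  · rw [hYinv]
    ext i j
    fin_cases i <;> fin_cases j <;>
      simp [Matrix.mul_apply, Fin.sum_univ_two] <;> ring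
  · rw [hdetT, hdetXY, htr]; ring
  · rw [Matrix.isUnit_iff_isUnit_det, isUnit_iff_ne_zero, hdetT, hdetXY, htr]
    constructor
    · intro h h2
      apply h
      rw [div_one] at h2
      rw [h2]; ring
    · intro h h2
      apply h
      rw [div_one]
      linear_combination -h2
end
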